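/- The number of fireworks permutations of {1,…,n} equals the number of set partitions of {1,…,n} (the n-th Bell number). -/

import Mathlib

open scoped Classical

noncomputable section

namespace RajRegularity

variable {n : ℕ}

/-- Maximal length of an increasing subsequence of `w(i), …, w(n)` beginning with `w(i)`:
the largest cardinality of a set `s` of positions that contains `i`, consists of positions
`≥ i`, and on which `w` is strictly increasing. -/
def lisFrom (w : Equiv.Perm (Fin n)) (i : Fin n) : ℕ :=
  (Finset.univ.filter fun s : Finset (Fin n) =>
      i ∈ s ∧ (∀ j ∈ s, i ≤ j) ∧ ∀ j ∈ s, ∀ k ∈ s, j < k → w j < w k).sup Finset.card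

/-- `rajCode w i = (n − i + 1) −` (maximal length of an increasing subsequence of
`w(i), …, w(n)` beginning with `w(i)`); here positions are 0-based, so the number of
positions `≥ i` is `n - i`. -/
def rajCode (w : Equiv.Perm (Fin n)) (i : Fin n) : ℕ :=
  (n - (i : ℕ)) - lisFrom w i

/-- The Rajchgot index `raj w = Σᵢ rajCode w i`. -/
def raj (w : Equiv.Perm (Fin n)) : ℕ := ∑ i, rajCode w i

/-- The number of inversions of `w`: pairs of positions `i < j` with `w i > w j`. -/
def invNum (w : Equiv.Perm (Fin n)) : ℕ :=
  (Finset.univ.filter fun p : Fin n × Fin n => p.1 < p.2 ∧ w p.2 < w p.1).card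

/-- The `i`-th entry of the inv code: `ℓ_i(w) = #{ j : i < j, w j < w i }`. -/
def ellCode (w : Equiv.Perm (Fin n)) (i : Fin n) : ℕ :=
  (Finset.univ.filter fun j : Fin n => i < j ∧ w j < w i).card

/-- The set of descent positions of `w` (0-based position `j` with `w j > w (j+1)`). -/
def descents (w : Equiv.Perm (Fin n)) : Finset (Fin n) :=
  Finset.univ.filter fun j : Fin n =>
    if h : (j : ℕ) + 1 < n then w ⟨(j : ℕ) + 1, h⟩ < w j else False

/-- The major index: the sum of the (1-based) descent positions of `w`. -/
def maj (w : Equiv.Perm (Fin n)) : ℕ := ∑ j ∈ descents w, ((j : ℕ) + 1)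

/-- `mCode w i`: the number of descents of `w` at positions `≥ i`. -/
def mCode (w : Equiv.Perm (Fin n)) (i : Fin n) : ℕ :=
  ((descents w).filter fun j => i ≤ j).card

/-- `w` is dominant iff it avoids the pattern 132. -/
def Dominant (w : Equiv.Perm (Fin n)) : Prop :=
  ¬ ∃ i j k : Fin n, i < j ∧ j < k ∧ w i < w k ∧ w k < w j

/-- `w` is fireworks iff there are no positions `i < j` with `w j < w (j+1) < w i`. -/
def Fireworks (w : Equiv.Perm (Fin n)) : Prop :=
  ¬ ∃ (i j : Fin n) (h : (j : ℕ) + 1 < n),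
      i < j ∧ w j < w ⟨(j : ℕ) + 1, h⟩ ∧ w ⟨(j : ℕ) + 1, h⟩ < w i

/-- `w` is inverse fireworks iff `w⁻¹` is fireworks. -/
def InvFireworks (w : Equiv.Perm (Fin n)) : Prop := Fireworks w⁻¹

/-- `w` is a valley permutation: for some `a`, it is strictly decreasing on positions `≤ a`
and strictly increasing on positions `≥ a`. -/
def Valley (w : Equiv.Perm (Fin n)) : Prop :=
  ∃ a : ℕ, (∀ i j : Fin n, i < j → (j : ℕ) ≤ a → w j < w i) ∧
    ∀ i j : Fin n, a ≤ (i : ℕ) → i < j → w i < w j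

/-- `eps w i` is the (1-based) blob index `ε_i(w) = i + r_i(w)`. -/
def eps (w : Equiv.Perm (Fin n)) (i : Fin n) : ℕ := (i : ℕ) + 1 + rajCode w i

/-- The shape of `w`: `α_k(w) = #{ i : ε_i(w) = k }` (here `k : Fin n` stands for the
1-based index `k + 1`). -/
def shape (w : Equiv.Perm (Fin n)) : Fin n → ℕ := fun k =>
  (Finset.univ.filter fun i : Fin n => eps w i = (k : ℕ) + 1).card

/-- Dominance order on shapes: `α ⪰ β` iff every tail sum of `α` is at least the
corresponding tail sum of `β`. -/
def Dominates (α β : Fin n → ℕ) : Prop :=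
  ∀ m : Fin n,
    ∑ k ∈ Finset.univ.filter (fun k : Fin n => m ≤ k), β k ≤
      ∑ k ∈ Finset.univ.filter (fun k : Fin n => m ≤ k), α k

/-- Right weak order: `u ≤_R w` iff `w = u * v` length-additively. -/
def leR (u w : Equiv.Perm (Fin n)) : Prop :=
  ∃ v : Equiv.Perm (Fin n), w = u * v ∧ invNum w = invNum u + invNum v

/-- Left weak order: `u ≤_L w` iff `w = v * u` length-additively. -/
def leL (u w : Equiv.Perm (Fin n)) : Prop :=
  ∃ v : Equiv.Perm (Fin n), w = v * u ∧ invNum w = invNum v + invNum u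

/-- Two-sided weak order: the transitive closure of the union of left and right weak
orders (both are reflexive, so we may use the reflexive-transitive closure). -/
def leLR (u w : Equiv.Perm (Fin n)) : Prop :=
  Relation.ReflTransGen (fun a b : Equiv.Perm (Fin n) => leL a b ∨ leR a b) u w

/-- The maximum of the block of the set partition `π(w)` containing the value `v`;
the block of `v` is `{ v' : ε_{w⁻¹ v'}(w) = ε_{w⁻¹ v}(w) }`. -/
def blockMax (w : Equiv.Perm (Fin n)) (v : Fin n) : ℕ :=
  ((Finset.univ.filter fun v' : Fin n => eps w (w⁻¹ v') = eps w (w⁻¹ v)).max'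
      ⟨v, Finset.mem_filter.mpr ⟨Finset.mem_univ v, rfl⟩⟩).val

/-- The fireworks map `Φ`: the one-line word of `Φ w` lists the blocks of `π(w)` in
increasing order of their maxima, each block written in decreasing order.  Equivalently,
`Φ w` sorts the values by the key (max of block, value reversed), lexicographically. -/
def Phi (w : Equiv.Perm (Fin n)) : Equiv.Perm (Fin n) :=
  Tuple.sort fun v : Fin n => n * blockMax w v + (n - 1 - (v : ℕ))

/-- The inverse fireworks map `Φ_inv w = Φ(w⁻¹)⁻¹`. -/
def PhiInv (w : Equiv.Perm (Fin n)) : Equiv.Perm (Fin n) := (Phi w⁻¹)⁻¹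

/-- Partial sums of a sequence of block sizes. -/
def psum (a : ℕ → ℕ) (m : ℕ) : ℕ := ∑ j ∈ Finset.range m, a j

/-- The index of the block (interval `[psum a m, psum a (m+1))`) containing the value `v`. -/
def blockIdx (n : ℕ) (a : ℕ → ℕ) (v : Fin n) : ℕ :=
  ((Finset.range n).filter fun m => psum a (m + 1) ≤ (v : ℕ)).card

/-- The layered permutation with block sizes `a 0, a 1, …`: it reverses each of the
consecutive intervals `[psum a m, psum a (m+1))` of `{0, …, n-1}`.  Equivalently, its
one-line word sorts the values by (block index, value reversed) lexicographically. -/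
def layered (n : ℕ) (a : ℕ → ℕ) : Equiv.Perm (Fin n) :=
  Tuple.sort fun v : Fin n => n * blockIdx n a v + (n - 1 - (v : ℕ))

/-- The layered permutation `e_α` associated to a shape `α : Fin n → ℕ`. -/
def eOf (α : Fin n → ℕ) : Equiv.Perm (Fin n) :=
  layered n fun m => if h : m < n then α ⟨m, h⟩ else 0


/-! ### Auxiliary development for the fireworks–partitions bijection -/

section FWProofAux

variable {n : ℕ}

/-- Sorting key: primary key `f v` (block leader), secondary key `v` reversed. -/
def Key (f : Fin n → Fin n) (v : Fin n) : ℕ := n * (f v : ℕ) + (n - 1 - (v : ℕ))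

lemma key_lt_of_flt {f : Fin n → Fin n} {x y : Fin n} (h : f x < f y) :
    Key f x < Key f y := by
  have h1 : n * ((f x : ℕ)) + n ≤ n * ((f y : ℕ)) := by
    have h2 : (f x : ℕ) + 1 ≤ (f y : ℕ) := h
    calc n * ((f x : ℕ)) + n = n * ((f x : ℕ) + 1) := by ring
    _ ≤ n * ((f y : ℕ)) := Nat.mul_le_mul_left n h2
  have hx := x.isLt
  have hy := y.isLt
  unfold Key
  set A := n * ((f x : ℕ)) with hA
  set B := n * ((f y : ℕ)) with hB
  omega

lemma key_lt_of_feq {f : Fin n → Fin n} {x y : Fin n} (h : (f x : ℕ) = (f y : ℕ))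
    (hxy : (y : ℕ) < (x : ℕ)) : Key f x < Key f y := by
  have hx := x.isLt
  unfold Key
  rw [h]
  set B := n * ((f y : ℕ)) with hB
  omega

lemma fle_of_key_le {f : Fin n → Fin n} {x y : Fin n} (h : Key f x ≤ Key f y) :
    (f x : ℕ) ≤ (f y : ℕ) := by
  by_contra hc
  push_neg at hc
  exact absurd h (not_le.mpr (key_lt_of_flt (show f y < f x from hc)))

lemma key_inj (f : Fin n → Fin n) : Function.Injective (Key f) := by
  intro x y h
  have h1 : (f x : ℕ) = (f y : ℕ) :=
    le_antisymm (fle_of_key_le h.le) (fle_of_key_le h.ge)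
  unfold Key at h
  rw [h1] at h
  have hx := x.isLt
  have hy := y.isLt
  exact Fin.ext (by omega)

/-- A stepwise criterion for strict monotonicity of `Fin n → ℕ`. -/
lemma strictMono_of_step {g : Fin n → ℕ}
    (h : ∀ (j : ℕ) (hj : j + 1 < n), g ⟨j, Nat.lt_of_succ_lt hj⟩ < g ⟨j + 1, hj⟩) :
    StrictMono g := by
  have key : ∀ (d a : ℕ) (hd : a + d + 1 < n), g ⟨a, by omega⟩ < g ⟨a + d + 1, hd⟩ := by
    intro d
    induction d with
    | zero => intro a hd; exact h a hd
    | succ d ih =>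
        intro a hd
        exact lt_trans (ih a (by omega)) (h (a + d + 1) hd)
  intro a b hab
  have hab' : (a : ℕ) < (b : ℕ) := hab
  have hd : (a : ℕ) + ((b : ℕ) - (a : ℕ) - 1) + 1 = (b : ℕ) := by omega
  have hlt : (a : ℕ) + ((b : ℕ) - (a : ℕ) - 1) + 1 < n := by
    rw [hd]; exact b.isLt
  have := key ((b : ℕ) - (a : ℕ) - 1) (a : ℕ) hlt
  have e1 : (⟨(a : ℕ), by omega⟩ : Fin n) = a := Fin.ext rfl
  have e2 : (⟨(a : ℕ) + ((b : ℕ) - (a : ℕ) - 1) + 1, hlt⟩ : Fin n) = b := Fin.ext hd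
  rwa [e1, e2] at this

/-- The leader of the value `v` under `w`: the largest value `y ≥ v` appearing at a
position not later than the position of `v`. -/
def Lf (w : Equiv.Perm (Fin n)) (v : Fin n) : Fin n :=
  (Finset.univ.filter fun y : Fin n => v ≤ y ∧ w⁻¹ y ≤ w⁻¹ v).max'
    ⟨v, Finset.mem_filter.mpr ⟨Finset.mem_univ v, le_refl v, le_refl _⟩⟩

lemma Lf_mem (w : Equiv.Perm (Fin n)) (v : Fin n) :
    Lf w v ∈ Finset.univ.filter fun y : Fin n => v ≤ y ∧ w⁻¹ y ≤ w⁻¹ v :=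
  Finset.max'_mem _ _

lemma le_Lf (w : Equiv.Perm (Fin n)) (v : Fin n) : v ≤ Lf w v :=
  ((Finset.mem_filter.mp (Lf_mem w v)).2).1

lemma Lf_pos_le (w : Equiv.Perm (Fin n)) (v : Fin n) : w⁻¹ (Lf w v) ≤ w⁻¹ v :=
  ((Finset.mem_filter.mp (Lf_mem w v)).2).2

lemma le_Lf_max {w : Equiv.Perm (Fin n)} {v y : Fin n} (h1 : v ≤ y)
    (h2 : w⁻¹ y ≤ w⁻¹ v) : y ≤ Lf w v :=
  Finset.le_max' _ _ (Finset.mem_filter.mpr ⟨Finset.mem_univ y, h1, h2⟩)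

lemma Lf_idem (w : Equiv.Perm (Fin n)) (v : Fin n) : Lf w (Lf w v) = Lf w v := by
  refine le_antisymm (Finset.max'_le _ _ _ ?_) (le_Lf w (Lf w v))
  intro y hy
  obtain ⟨-, h1, h2⟩ := Finset.mem_filter.mp hy
  exact le_Lf_max (le_trans (le_Lf w v) h1) (le_trans h2 (Lf_pos_le w v))

lemma Equiv.Perm.inv_apply_self (w : Equiv.Perm (Fin n)) (x : Fin n) : w⁻¹ (w x) = x := by
  simp only [Equiv.Perm.coe_inv, Equiv.symm_apply_apply]

lemma Equiv.Perm.apply_inv_self (w : Equiv.Perm (Fin n)) (x : Fin n) : w (w⁻¹ x) = x := by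
  simp only [Equiv.Perm.coe_inv, Equiv.apply_symm_apply]

/-- Consecutive key comparison for a fireworks permutation. -/
lemma step_lt {w : Equiv.Perm (Fin n)} (hw : Fireworks w) (j : ℕ) (hj : j + 1 < n) :
    Key (Lf w) (w ⟨j, Nat.lt_of_succ_lt hj⟩) < Key (Lf w) (w ⟨j + 1, hj⟩) := by
  set j0 : Fin n := ⟨j, Nat.lt_of_succ_lt hj⟩ with hj0
  set j1 : Fin n := ⟨j + 1, hj⟩ with hj1
  have hne : w j0 ≠ w j1 := by
    intro h
    have := w.injective h
    rw [hj0, hj1] at this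
    exact absurd (congrArg Fin.val this) (by simp)
  have hj01 : j0 < j1 := by rw [hj0, hj1]; exact Fin.mk_lt_mk.mpr (Nat.lt_succ_self j)
  rcases lt_or_gt_of_ne hne with hasc | hdesc
  · -- ascent: `w j1` is a new global leader
    have hall : ∀ i : Fin n, i ≤ j0 → w i < w j1 := by
      intro i hi
      rcases eq_or_lt_of_le hi with he | hlt
      · rw [he]; exact hasc
      · by_contra hc
        push_neg at hc
        have hne2 : w j1 ≠ w i := fun h => absurd (w.injective h) (ne_of_gt (hlt.trans hj01))
        exact hw ⟨i, j0, hj, hlt, hasc, lt_of_le_of_ne hc hne2⟩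
    have hLb : Lf w (w j1) = w j1 := by
      refine le_antisymm (Finset.max'_le _ _ _ ?_) (le_Lf w (w j1))
      intro y hy
      obtain ⟨-, h1, h2⟩ := Finset.mem_filter.mp hy
      rw [Equiv.Perm.inv_apply_self] at h2
      rcases eq_or_lt_of_le h2 with he | hlt
      · have : y = w j1 := by
          rw [← Equiv.Perm.apply_inv_self w y, he]
        exact le_of_eq this
      · have hle : w⁻¹ y ≤ j0 := by
          rw [hj0]
          exact Fin.mk_le_mk.mpr (Nat.lt_succ_iff.mp (by
            have := Fin.lt_def.mp hlt
            simpa [hj1] using this))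
        have := hall (w⁻¹ y) hle
        rw [Equiv.Perm.apply_inv_self] at this
        exact absurd h1 (not_le.mpr this)
    have hflt : Lf w (w j0) < w j1 := by
      have hp := Lf_pos_le w (w j0)
      rw [Equiv.Perm.inv_apply_self] at hp
      have := hall (w⁻¹ (Lf w (w j0))) hp
      rwa [Equiv.Perm.apply_inv_self] at this
    exact key_lt_of_flt (by rw [hLb]; exact hflt)
  · -- descent: same leader, keys ordered by reversed value
    have hLeq : Lf w (w j1) = Lf w (w j0) := by
      refine le_antisymm (Finset.max'_le _ _ _ ?_) ?_
      · intro y hy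
        obtain ⟨-, h1, h2⟩ := Finset.mem_filter.mp hy
        rw [Equiv.Perm.inv_apply_self] at h2
        rcases eq_or_lt_of_le h2 with he | hlt
        · have hy2 : y = w j1 := by rw [← Equiv.Perm.apply_inv_self w y, he]
          rw [hy2]
          exact le_of_lt (lt_of_lt_of_le hdesc (le_Lf w (w j0)))
        · have hle : w⁻¹ y ≤ j0 := by
            rw [hj0]
            exact Fin.mk_le_mk.mpr (Nat.lt_succ_iff.mp (by
              have := Fin.lt_def.mp hlt
              simpa [hj1] using this))
          rcases le_or_gt (w j0) y with hge | hlt2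
          · exact le_Lf_max hge (by rwa [Equiv.Perm.inv_apply_self])
          · exact le_of_lt (lt_of_lt_of_le hlt2 (le_Lf w (w j0)))
      · refine le_Lf_max (le_of_lt (lt_of_lt_of_le hdesc (le_Lf w (w j0)))) ?_
        calc w⁻¹ (Lf w (w j0)) ≤ w⁻¹ (w j0) := Lf_pos_le w (w j0)
        _ ≤ w⁻¹ (w j1) := by
            rw [Equiv.Perm.inv_apply_self, Equiv.Perm.inv_apply_self]
            exact le_of_lt hj01
    refine key_lt_of_feq ?_ ?_
    · exact congrArg Fin.val hLeq.symm
    · exact hdesc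

lemma strictMono_key_fireworks {w : Equiv.Perm (Fin n)} (hw : Fireworks w) :
    StrictMono (fun i => Key (Lf w) (w i)) :=
  strictMono_of_step (fun j hj => step_lt hw j hj)

/-- A fireworks permutation is recovered by sorting with its leader key. -/
lemma sort_Lf {w : Equiv.Perm (Fin n)} (hw : Fireworks w) :
    Tuple.sort (Key (Lf w)) = w := by
  have hs := strictMono_key_fireworks hw
  symm
  rw [Tuple.eq_sort_iff]
  constructor
  · exact hs.monotone
  · intro i j hij heq
    exact absurd heq (ne_of_lt (hs hij))

lemma smono_sort (f : Fin n → Fin n) :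
    StrictMono (fun i => Key f (Tuple.sort (Key f) i)) :=
  (Tuple.monotone_sort (Key f)).strictMono_of_injective
    ((key_inj f).comp (Tuple.sort (Key f)).injective)

lemma pos_lt_iff (f : Fin n → Fin n) {x y : Fin n} :
    (Tuple.sort (Key f))⁻¹ x < (Tuple.sort (Key f))⁻¹ y ↔ Key f x < Key f y := by
  have hs := smono_sort f
  have h1 := hs.lt_iff_lt (a := (Tuple.sort (Key f))⁻¹ x) (b := (Tuple.sort (Key f))⁻¹ y)
  simp only [Equiv.Perm.apply_inv_self] at h1
  exact h1.symm

lemma pos_le_iff (f : Fin n → Fin n) {x y : Fin n} :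
    (Tuple.sort (Key f))⁻¹ x ≤ (Tuple.sort (Key f))⁻¹ y ↔ Key f x ≤ Key f y := by
  have hs := smono_sort f
  have h1 := hs.le_iff_le (a := (Tuple.sort (Key f))⁻¹ x) (b := (Tuple.sort (Key f))⁻¹ y)
  simp only [Equiv.Perm.apply_inv_self] at h1
  exact h1.symm

/-- The leader function of the sorted permutation of `f` is `f` itself. -/
lemma Lf_sort (f : Fin n → Fin n) (hf1 : ∀ v, v ≤ f v) (hf2 : ∀ v, f (f v) = f v) :
    Lf (Tuple.sort (Key f)) = f := by
  funext v
  refine le_antisymm (Finset.max'_le _ _ _ ?_) ?_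
  · intro y hy
    obtain ⟨-, h1, h2⟩ := Finset.mem_filter.mp hy
    have hk : Key f y ≤ Key f v := (pos_le_iff f).mp h2
    have h3 : (f y : ℕ) ≤ (f v : ℕ) := fle_of_key_le hk
    calc y ≤ f y := hf1 y
    _ ≤ f v := h3
  · refine le_Lf_max (hf1 v) ?_
    refine (pos_le_iff f).mpr ?_
    unfold Key
    rw [hf2 v]
    have h4 : (v : ℕ) ≤ (f v : ℕ) := hf1 v
    set A := n * ((f v : ℕ)) with hA
    omega

/-- The sorted permutation of any idempotent-dominating `f` is fireworks. -/
lemma fireworks_sort (f : Fin n → Fin n) (hf1 : ∀ v, v ≤ f v) (hf2 : ∀ v, f (f v) = f v) :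
    Fireworks (Tuple.sort (Key f)) := by
  set w := Tuple.sort (Key f) with hwdef
  rintro ⟨i, j, h, hij, h1, h2⟩
  set j1 : Fin n := ⟨(j : ℕ) + 1, h⟩ with hj1
  have hs : StrictMono (fun i => Key f (w i)) := smono_sort f
  have hjj1 : j < j1 := by rw [hj1]; exact Fin.lt_def.mpr (Nat.lt_succ_self _)
  have hij1 : i < j1 := hij.trans hjj1
  have hki : Key f (w i) < Key f (w j1) := hs hij1
  have hkj : Key f (w j) < Key f (w j1) := hs hjj1
  rcases eq_or_lt_of_le (hf1 (w j1)) with he | hlt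
  · -- `w j1` is its own leader, yet a larger value appears before it
    have h5 : f (w j1) < f (w i) := by
      calc f (w j1) = w j1 := he.symm
      _ < w i := h2
      _ ≤ f (w i) := hf1 (w i)
    exact absurd hki (not_lt.mpr (le_of_lt (key_lt_of_flt h5)))
  · -- the leader `c` of `w j1` must appear both before and after position `j`
    set c := f (w j1) with hc
    have hcc : f c = c := hf2 _
    have hk1 : Key f c < Key f (w j1) := key_lt_of_feq (by rw [hcc]) hlt
    have hle : (f (w j)) ≤ (f (w j1)) := by
      have := fle_of_key_le hkj.le
      exact this
    have hfwjlt : f (w j) < f (w j1) := by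
      rcases eq_or_lt_of_le hle with heq | hlt2
      · exfalso
        have heq2 : (f (w j1) : ℕ) = (f (w j) : ℕ) := congrArg Fin.val heq.symm
        have := key_lt_of_feq heq2 (show ((w j : Fin n) : ℕ) < ((w j1 : Fin n) : ℕ) from h1)
        exact absurd hkj (not_lt.mpr (le_of_lt this))
      · exact hlt2
    have hk2 : Key f (w j) < Key f c := key_lt_of_flt (by rw [hcc]; exact hfwjlt)
    have hp1 : w⁻¹ c < w⁻¹ (w j1) := (pos_lt_iff f).mpr hk1
    have hp2 : w⁻¹ (w j) < w⁻¹ c := (pos_lt_iff f).mpr hk2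
    rw [Equiv.Perm.inv_apply_self] at hp1 hp2
    have e1 : ((w⁻¹ c : Fin n) : ℕ) < (j : ℕ) + 1 := by
      have := Fin.lt_def.mp hp1
      simpa [hj1] using this
    have e2 : (j : ℕ) < ((w⁻¹ c : Fin n) : ℕ) := Fin.lt_def.mp hp2
    omega

/-- The equivalence between leader functions and fireworks permutations. -/
def tEquivFW :
    {f : Fin n → Fin n // (∀ v, v ≤ f v) ∧ ∀ v, f (f v) = f v} ≃
      {w : Equiv.Perm (Fin n) // Fireworks w} where
  toFun f := ⟨Tuple.sort (Key f.1), fireworks_sort f.1 f.2.1 f.2.2⟩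
  invFun w := ⟨Lf w.1, fun v => le_Lf _ _, fun v => Lf_idem _ _⟩
  left_inv f := Subtype.ext (Lf_sort f.1 f.2.1 f.2.2)
  right_inv w := Subtype.ext (sort_Lf w.2)

/-! ### Partitions and leader functions -/

/-- The maximum of the part of `P` containing `v`. -/
def maxPart (P : Finpartition (Finset.univ : Finset (Fin n))) (v : Fin n) : Fin n :=
  (P.part v).max' ⟨v, P.mem_part (Finset.mem_univ v)⟩

lemma maxPart_mem (P : Finpartition (Finset.univ : Finset (Fin n))) (v : Fin n) :
    maxPart P v ∈ P.part v := Finset.max'_mem _ _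

lemma le_maxPart (P : Finpartition (Finset.univ : Finset (Fin n))) (v : Fin n) :
    v ≤ maxPart P v := Finset.le_max' _ _ (P.mem_part (Finset.mem_univ v))

lemma part_maxPart (P : Finpartition (Finset.univ : Finset (Fin n))) (v : Fin n) :
    P.part (maxPart P v) = P.part v :=
  P.part_eq_of_mem (P.part_mem.mpr (Finset.mem_univ v)) (maxPart_mem P v)

lemma maxPart_idem (P : Finpartition (Finset.univ : Finset (Fin n))) (v : Fin n) :
    maxPart P (maxPart P v) = maxPart P v := by
  refine le_antisymm (Finset.max'_le _ _ _ ?_) (le_maxPart P (maxPart P v))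
  intro y hy
  rw [part_maxPart] at hy
  exact Finset.le_max' _ _ hy

lemma maxPart_eq_iff (P : Finpartition (Finset.univ : Finset (Fin n))) (a b : Fin n) :
    maxPart P a = maxPart P b ↔ P.part a = P.part b := by
  constructor
  · intro h
    calc P.part a = P.part (maxPart P a) := (part_maxPart P a).symm
    _ = P.part (maxPart P b) := by rw [h]
    _ = P.part b := part_maxPart P b
  · intro h
    unfold maxPart
    congr 1

lemma part_ext {P Q : Finpartition (Finset.univ : Finset (Fin n))}
    (h : ∀ a, P.part a = Q.part a) : P = Q := by
  ext t
  constructor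
  · intro ht
    obtain ⟨a, ha⟩ := P.nonempty_of_mem_parts ht
    have : t = P.part a := (P.part_eq_of_mem ht ha).symm
    rw [this, h a]
    exact Q.part_mem.mpr (Finset.mem_univ a)
  · intro ht
    obtain ⟨a, ha⟩ := Q.nonempty_of_mem_parts ht
    have : t = Q.part a := (Q.part_eq_of_mem ht ha).symm
    rw [this, ← h a]
    exact P.part_mem.mpr (Finset.mem_univ a)

/-- The equivalence between finpartitions and leader functions. -/
def partEquivT :
    Finpartition (Finset.univ : Finset (Fin n)) ≃
      {f : Fin n → Fin n // (∀ v, v ≤ f v) ∧ ∀ v, f (f v) = f v} where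
  toFun P := ⟨maxPart P, fun v => le_maxPart P v, fun v => maxPart_idem P v⟩
  invFun f := Finpartition.ofSetoid (Setoid.ker f.1)
  left_inv P := by
    refine part_ext (fun a => ?_)
    ext b
    rw [Finpartition.mem_part_ofSetoid_iff_rel]
    show maxPart P a = maxPart P b ↔ _
    rw [maxPart_eq_iff]
    rw [P.mem_part_iff_part_eq_part (Finset.mem_univ b) (Finset.mem_univ a)]
    exact ⟨fun h => h.symm, fun h => h.symm⟩
  right_inv f := by
    refine Subtype.ext (funext fun v => ?_)
    show maxPart (Finpartition.ofSetoid (Setoid.ker f.1)) v = f.1 v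
    unfold maxPart
    refine le_antisymm (Finset.max'_le _ _ _ ?_) (Finset.le_max' _ _ ?_)
    · intro y hy
      rw [Finpartition.mem_part_ofSetoid_iff_rel] at hy
      have hy2 : f.1 v = f.1 y := hy
      calc y ≤ f.1 y := f.2.1 y
      _ = f.1 v := hy2.symm
    · rw [Finpartition.mem_part_ofSetoid_iff_rel]
      show f.1 v = f.1 (f.1 v)
      exact (f.2.2 v).symm

end FWProofAux

/-- The number of fireworks permutations of `{1,…,n}` equals the number of
set partitions of `{1,…,n}` (the `n`-th Bell number). -/
theorem card_fireworks_eq_card_setPartitions (n : ℕ) :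
    Nat.card {w : Equiv.Perm (Fin n) // Fireworks w} =
      Nat.card (Finpartition (Finset.univ : Finset (Fin n))) := by
  rw [Nat.card_congr (tEquivFW (n := n)).symm, Nat.card_congr (partEquivT (n := n)).symm]

end RajRegularity
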